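/- Let γ > 1, f ∈ ℝ^M nonnegative with ∑ f_j = 1, and let T be the M×M upper-triangular Toeplitz matrix with T_{i,j} = γ^{−(j−i)} for j ≥ i. Then the vector θ = Tf / (𝟙ᵀ T f) (assuming 𝟙ᵀTf > 0) satisfies θ_j = (∑_{k=j}^M γ^{j−k} f_k) / (∑_{k=1}^M f_k (1−γ^{−k})/(1−γ^{−1})), coinciding with the deterministic steady-state portfolio shares; in particular the invariant portfolio shares are independent of the rate vector r, the deficit level, and the rate–deficit covariance Σ. -/

import Mathlib

open Finset Matrix

lemma mulVec_eq (M : ℕ) (γ : ℝ) (f : Fin M → ℝ)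
    (T : Matrix (Fin M) (Fin M) ℝ)
    (hT : ∀ i j, T i j = if i ≤ j then (γ ^ ((j : ℕ) - (i : ℕ)))⁻¹ else 0)
    (j : Fin M) :
    T.mulVec f j = ∑ k ∈ Finset.Ici j, (γ ^ ((k : ℕ) - (j : ℕ)))⁻¹ * f k := by
  unfold Matrix.mulVec dotProduct
  have key : ∀ k : Fin M, T j k * f k
      = if j ≤ k then (γ ^ ((k : ℕ) - (j : ℕ)))⁻¹ * f k else 0 := by
    intro k
    rw [hT j k]
    split <;> simp
  simp only [key]
  rw [Finset.sum_ite, Finset.sum_const_zero, add_zero]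
  apply Finset.sum_congr
  · ext k; simp
  · intros; rfl

lemma geom_inner (M : ℕ) (γ : ℝ) (hγ : 1 < γ) (k : Fin M) :
    ∑ i ∈ Finset.Iic k, (γ ^ ((k : ℕ) - (i : ℕ)))⁻¹
      = (1 - (γ ^ ((k : ℕ) + 1))⁻¹) / (1 - γ⁻¹) := by
  have hne : γ⁻¹ ≠ 1 := by
    intro h
    have hγ0 : γ ≠ 0 := by linarith
    have : γ = 1 := by field_simp at h; linarith
    linarith
  have key : ∑ i ∈ Finset.Iic k, (γ ^ ((k : ℕ) - (i : ℕ)))⁻¹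
      = ∑ d ∈ Finset.range ((k : ℕ) + 1), (γ⁻¹) ^ d := by
    refine Finset.sum_nbij' (i := fun i => (k : ℕ) - (i : ℕ))
      (j := fun d => (⟨(k : ℕ) - d, lt_of_le_of_lt (Nat.sub_le _ _) k.isLt⟩ : Fin M))
      ?_ ?_ ?_ ?_ ?_
    · intro i hi
      simp only [Finset.mem_Iic, Fin.le_def] at hi
      simp only [Finset.mem_range]; omega
    · intro d hd
      simp only [Finset.mem_range] at hd
      simp only [Finset.mem_Iic, Fin.le_def]; omega
    · intro i hi
      simp only [Finset.mem_Iic, Fin.le_def] at hi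
      apply Fin.ext; simp; omega
    · intro d hd
      simp only [Finset.mem_range] at hd
      simp; omega
    · intro i hi
      rw [inv_pow]
  rw [key, geom_sum_eq hne, inv_pow]
  have h1 : (1 : ℝ) - γ⁻¹ ≠ 0 := fun h => hne (by linarith [sub_eq_zero.mp h])
  have h2 : γ⁻¹ - (1 : ℝ) ≠ 0 := sub_ne_zero.mpr hne
  rw [div_eq_div_iff h2 h1]
  ring

theorem stmt_16 (M : ℕ) (hM : 1 ≤ M) (γ : ℝ) (hγ : 1 < γ)
    (f : Fin M → ℝ) (hf : ∀ j, 0 ≤ f j) (hfsum : ∑ j, f j = 1)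
    (T : Matrix (Fin M) (Fin M) ℝ)
    (hT : ∀ i j, T i j = if i ≤ j then (γ ^ ((j : ℕ) - (i : ℕ)))⁻¹ else 0)
    (hpos : 0 < ∑ i, T.mulVec f i) :
    ∀ j, T.mulVec f j / (∑ i, T.mulVec f i) =
      (∑ k ∈ Finset.Ici j, (γ ^ ((k : ℕ) - (j : ℕ)))⁻¹ * f k) /
        (∑ k, f k * (1 - (γ ^ ((k : ℕ) + 1))⁻¹) / (1 - γ⁻¹)) := by
  intro j
  have hden : ∑ i, T.mulVec f i
      = ∑ k, f k * (1 - (γ ^ ((k : ℕ) + 1))⁻¹) / (1 - γ⁻¹) := by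
    calc ∑ i, T.mulVec f i
        = ∑ i : Fin M, ∑ k ∈ Finset.Ici i, (γ ^ ((k : ℕ) - (i : ℕ)))⁻¹ * f k :=
          Finset.sum_congr rfl fun i _ => mulVec_eq M γ f T hT i
      _ = ∑ i : Fin M, ∑ k : Fin M,
            (if i ≤ k then (γ ^ ((k : ℕ) - (i : ℕ)))⁻¹ * f k else 0) := by
          apply Finset.sum_congr rfl
          intro i _
          rw [← Finset.sum_filter]
          apply Finset.sum_congr
          · ext k; simp
          · intros; rfl
      _ = ∑ k : Fin M, ∑ i : Fin M,
            (if i ≤ k then (γ ^ ((k : ℕ) - (i : ℕ)))⁻¹ * f k else 0) :=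
          Finset.sum_comm
      _ = ∑ k : Fin M, (∑ i ∈ Finset.Iic k, (γ ^ ((k : ℕ) - (i : ℕ)))⁻¹) * f k := by
          apply Finset.sum_congr rfl
          intro k _
          rw [← Finset.sum_filter, Finset.sum_mul]
          apply Finset.sum_congr
          · ext i; simp
          · intros; rfl
      _ = ∑ k, f k * (1 - (γ ^ ((k : ℕ) + 1))⁻¹) / (1 - γ⁻¹) := by
          apply Finset.sum_congr rfl
          intro k _
          rw [geom_inner M γ hγ k]
          ring
  rw [mulVec_eq M γ f T hT j, ← hden]
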